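/- arXiv:0707.0093 — 2 statements merged into one kernel-verified Lean document; each statement's English description precedes it below -/
import Mathlib

section
/- If μ_0, μ_1, …, μ_ℓ is a sequence of distributions obtained by applying a sequence of lossy moves (μ_i = v_i↓ μ_{i−1} for each i), then there exists a sequence of distributions μ'_0, μ'_1, …, μ'_ℓ obtained by a weight-constrained sequence of moves such that μ'_0 = μ_0 and μ'_i(x) ≥ μ_i(x) for every 1 ≤ i ≤ ℓ and x ∈ ℝ. -/
/-- The total mass of `μ` on a set `A` of positions. -/
noncomputable def mass (μ : ℝ →₀ ℝ) (A : Set ℝ) : ℝ :=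
  ∑ x ∈ μ.support, Set.indicator A μ x

/-- The `j`-th moment of a finitely supported mass function. -/
noncomputable def moment (j : ℕ) (μ : ℝ →₀ ℝ) : ℝ :=
  ∑ x ∈ μ.support, μ x * x ^ j

/-- The spread `S[μ] = Σ_{i<j} m_i m_j |x_i - x_j| = (1/2)·Σ_{x,y} μ(x) μ(y) |x - y|`. -/
noncomputable def spread (μ : ℝ →₀ ℝ) : ℝ :=
  (1 / 2) * ∑ x ∈ μ.support, ∑ y ∈ μ.support, μ x * μ y * |x - y|

/-- A distribution: finitely supported, nonnegative, not identically zero. -/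
def IsDistribution (μ : ℝ →₀ ℝ) : Prop :=
  (∀ x, 0 ≤ μ x) ∧ μ ≠ 0

/-- A move `([a, a+1], δ)`: a signed distribution `δ` supported in `[a, a+1]`
with vanishing total mass and first moment. -/
structure Move where
  a : ℝ
  δ : ℝ →₀ ℝ
  supp_subset : ∀ x, δ x ≠ 0 → a ≤ x ∧ x ≤ a + 1
  m0 : moment 0 δ = 0
  m1 : moment 1 δ = 0

/-- The center of a move. -/
noncomputable def Move.center (v : Move) : ℝ := v.a + 1 / 2

/-- `μ 0, μ 1, …, μ ℓ` is a sequence of distributions obtained by applying the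
moves `v 0, …, v (ℓ-1)` in order (each move applicable, i.e. each result is a
distribution). -/
def IsMoveSeq (ℓ : ℕ) (v : ℕ → Move) (μ : ℕ → ℝ →₀ ℝ) : Prop :=
  (∀ i ≤ ℓ, IsDistribution (μ i)) ∧ ∀ i < ℓ, μ (i + 1) = μ i + (v i).δ

/-- `μ_max(A) = max_{0 ≤ i ≤ ℓ} μ_i(A)`. -/
noncomputable def muMax (ℓ : ℕ) (μ : ℕ → ℝ →₀ ℝ) (A : Set ℝ) : ℝ :=
  (Finset.range (ℓ + 1)).sup' (Finset.nonempty_range_iff.mpr (Nat.succ_ne_zero ℓ))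
    (fun i => mass (μ i) A)

open scoped Classical in
/-- The number of moves among `v 0, …, v (ℓ-1)` whose center lies in `(a, ∞)`. -/
noncomputable def movesBeyond (ℓ : ℕ) (v : ℕ → Move) (a : ℝ) : ℕ :=
  ((Finset.range ℓ).filter (fun i => a < (v i).center)).card

/-- A sequence of moves is weight-constrained (w.r.t. the generated sequence of
distributions) if for every `a` the number of moves centered in `(a, ∞)` is at
most `μ_max{x > a}`. -/
def WeightConstrained (ℓ : ℕ) (v : ℕ → Move) (μ : ℕ → ℝ →₀ ℝ) : Prop :=
  ∀ a : ℝ, (movesBeyond ℓ v a : ℝ) ≤ muMax ℓ μ {x | a < x}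

/-- `μ'` is a basic split of `μ`: one point mass `(x, μ x)` of `μ` is replaced by
finitely many point masses of positive mass with total mass `μ x` and center of
mass at `x`, the remaining point masses being unchanged. -/
def BasicSplit (μ μ' : ℝ →₀ ℝ) : Prop :=
  ∃ (x : ℝ) (ν : ℝ →₀ ℝ), 0 < μ x ∧ (∀ y, 0 ≤ ν y) ∧
    moment 0 ν = μ x ∧ moment 1 ν = μ x * x ∧ μ' = μ.erase x + ν

/-- `μ ⪯ μ'` : `μ'` is obtained from `μ` by finitely many basic splits. -/
def Splits (μ μ' : ℝ →₀ ℝ) : Prop := Relation.ReflTransGen BasicSplit μ μ'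

/-- `ν` is the result of the extreme move on `[a, b]` applied to `μ`: `ν` agrees
with `μ` outside `[a, b]`, vanishes on `(a, b)`, and has the same total mass and
first moment as `μ` (so all mass in `[a, b]` is moved to the endpoints). -/
def IsExtremeMoveOn (a b : ℝ) (μ ν : ℝ →₀ ℝ) : Prop :=
  (∀ x, x ∉ Set.Icc a b → ν x = μ x) ∧
  (∀ x, x ∈ Set.Ioo a b → ν x = 0) ∧
  moment 0 ν = moment 0 μ ∧ moment 1 ν = moment 1 μ

open scoped Classical in
lemma mass_eq_sum_subset (μ : ℝ →₀ ℝ) (A : Set ℝ) (s : Finset ℝ)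
    (h : μ.support ⊆ s) : mass μ A = ∑ x ∈ s, Set.indicator A μ x := by
  refine Finset.sum_subset h fun x _ hx => ?_
  have : μ x = 0 := Finsupp.notMem_support_iff.mp hx
  simp [Set.indicator_apply, this]

lemma mass_add (μ ν : ℝ →₀ ℝ) (A : Set ℝ) :
    mass (μ + ν) A = mass μ A + mass ν A := by
  rw [mass_eq_sum_subset (μ + ν) A (μ.support ∪ ν.support) Finsupp.support_add,
      mass_eq_sum_subset μ A (μ.support ∪ ν.support) Finset.subset_union_left,
      mass_eq_sum_subset ν A (μ.support ∪ ν.support) Finset.subset_union_right,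
      ← Finset.sum_add_distrib]
  refine Finset.sum_congr rfl fun x _ => ?_
  by_cases hx : x ∈ A <;> simp [Set.indicator_apply, hx]

lemma mass_zero (A : Set ℝ) : mass (0 : ℝ →₀ ℝ) A = 0 := by
  simp [mass]

lemma mass_finset_sum {ι : Type*} (s : Finset ι) (f : ι → ℝ →₀ ℝ) (A : Set ℝ) :
    mass (∑ j ∈ s, f j) A = ∑ j ∈ s, mass (f j) A := by
  classical
  induction s using Finset.induction with
  | empty => simp [mass_zero]
  | insert _ _ hj ih => simp [Finset.sum_insert hj, mass_add, ih]

lemma mass_nonneg (μ : ℝ →₀ ℝ) (h : ∀ x, 0 ≤ μ x) (A : Set ℝ) : 0 ≤ mass μ A :=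
  Finset.sum_nonneg fun x _ => Set.indicator_nonneg (fun y _ => h y) x

lemma mass_single (c a : ℝ) :
    mass (Finsupp.single c (1 : ℝ)) {x | a < x} = if a < c then 1 else 0 := by
  unfold mass
  rw [Finsupp.support_single_ne_zero c one_ne_zero]
  simp [Set.indicator_apply, Set.mem_setOf_eq]

/-- **Lemma (lossy moves dominated by weight-constrained moves).** If
`μ 0, …, μ ℓ` is a sequence of distributions obtained by a sequence of lossy
moves, then there is a sequence of distributions `μ' 0, …, μ' ℓ` obtained by a
weight-constrained sequence of moves with `μ' 0 = μ 0` and `μ' i t ≥ μ i t`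
for every `1 ≤ i ≤ ℓ` and `t ∈ ℝ`. -/
theorem lossy_dominated_by_weight_constrained (ℓ : ℕ) (v : ℕ → Move)
    (μ : ℕ → ℝ →₀ ℝ)
    (hdist : ∀ i ≤ ℓ, IsDistribution (μ i))
    (hlossy : ∀ i < ℓ, μ (i + 1) = μ i + (v i).δ - Finsupp.single (v i).center 1) :
    ∃ (w : ℕ → Move) (μ' : ℕ → ℝ →₀ ℝ),
      IsMoveSeq ℓ w μ' ∧ WeightConstrained ℓ w μ' ∧ μ' 0 = μ 0 ∧
      ∀ i, 1 ≤ i → i ≤ ℓ → ∀ t : ℝ, μ i t ≤ μ' i t := by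

  classical
  set S : ℕ → ℝ →₀ ℝ :=
    fun i => ∑ j ∈ Finset.range i, Finsupp.single (v j).center (1 : ℝ) with hS
  have hSnn : ∀ i x, 0 ≤ S i x := by
    intro i x
    rw [hS]
    rw [Finsupp.finset_sum_apply]
    refine Finset.sum_nonneg fun j _ => ?_
    rw [Finsupp.single_apply]
    split <;> norm_num
  refine ⟨v, fun i => μ i + S i, ⟨?_, ?_⟩, ?_, ?_, ?_⟩
  · intro i hi
    refine ⟨fun x => add_nonneg ((hdist i hi).1 x) (hSnn i x), ?_⟩
    intro h0
    obtain ⟨x, hx⟩ := Finsupp.ne_iff.mp (hdist i hi).2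
    have hpos : 0 < μ i x := lt_of_le_of_ne ((hdist i hi).1 x) (by simpa using (Ne.symm hx))
    have := DFunLike.congr_fun h0 x
    simp only [Finsupp.add_apply, Finsupp.coe_zero, Pi.zero_apply] at this
    nlinarith [hSnn i x]
  · intro i hi
    have : S (i + 1) = S i + Finsupp.single (v i).center 1 := by
      rw [hS]; exact Finset.sum_range_succ _ _
    show μ (i + 1) + S (i + 1) = μ i + S i + (v i).δ
    rw [hlossy i hi, this]
    abel
  · intro a
    have hmem : ℓ ∈ Finset.range (ℓ + 1) := Finset.self_mem_range_succ ℓ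
    have hle : mass (μ ℓ + S ℓ) {x | a < x} ≤ muMax ℓ (fun i => μ i + S i) {x | a < x} :=
      Finset.le_sup' (fun i => mass (μ i + S i) {x | a < x}) hmem
    refine le_trans ?_ hle
    rw [mass_add]
    have hSmass : mass (S ℓ) {x | a < x} = (movesBeyond ℓ v a : ℝ) := by
      rw [hS, mass_finset_sum]
      simp only [mass_single]
      rw [Finset.sum_boole, movesBeyond]
    have := mass_nonneg (μ ℓ) (hdist ℓ le_rfl).1 {x | a < x}
    linarith [hSmass.ge]
  · simp [hS]
  · intro i _ _ t
    exact le_add_of_nonneg_right (hSnn i t)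
end

section
/- If μ ⪯ μ' and v is a move that can be applied to μ, then vμ ⪯ v̄μ', where v̄ is the extreme move on the interval of v. -/
section Helpers
open scoped Classical

lemma moment_eq_sum_subset (j : ℕ) (μ : ℝ →₀ ℝ) (s : Finset ℝ) (h : μ.support ⊆ s) :
    moment j μ = ∑ x ∈ s, μ x * x ^ j := by
  refine Finset.sum_subset h ?_
  intro x _ hx
  simp [Finsupp.notMem_support_iff.mp hx]

lemma moment_add (j : ℕ) (μ ν : ℝ →₀ ℝ) :
    moment j (μ + ν) = moment j μ + moment j ν := by
  rw [moment_eq_sum_subset j (μ + ν) (μ.support ∪ ν.support) Finsupp.support_add,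
    moment_eq_sum_subset j μ (μ.support ∪ ν.support) Finset.subset_union_left,
    moment_eq_sum_subset j ν (μ.support ∪ ν.support) Finset.subset_union_right,
    ← Finset.sum_add_distrib]
  refine Finset.sum_congr rfl fun x _ => ?_
  simp [add_mul]

lemma moment_zero (j : ℕ) : moment j (0 : ℝ →₀ ℝ) = 0 := by simp [moment]

lemma moment_smul (j : ℕ) (c : ℝ) (μ : ℝ →₀ ℝ) :
    moment j (c • μ) = c * moment j μ := by
  rw [moment_eq_sum_subset j (c • μ) μ.support (Finsupp.support_smul), moment,
    Finset.mul_sum]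
  refine Finset.sum_congr rfl fun x _ => ?_
  simp [Finsupp.smul_apply]; ring

lemma moment_single (j : ℕ) (c m : ℝ) : moment j (Finsupp.single c m) = m * c ^ j := by
  rcases eq_or_ne m 0 with h | h
  · simp [h, moment_zero]
  · rw [moment, Finsupp.support_single_ne_zero _ h]
    simp

lemma moment_erase (j : ℕ) (z : ℝ) (μ : ℝ →₀ ℝ) :
    moment j (μ.erase z) = moment j μ - μ z * z ^ j := by
  have h := Finsupp.erase_add_single z μ
  have := moment_add j (μ.erase z) (Finsupp.single z (μ z))
  rw [h, moment_single] at this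
  linarith

lemma moment_sum (j : ℕ) {ι : Type*} (s : Finset ι) (f : ι → ℝ →₀ ℝ) :
    moment j (∑ i ∈ s, f i) = ∑ i ∈ s, moment j (f i) := by
  induction s using Finset.cons_induction with
  | empty => simp [moment_zero]
  | cons i s hi ih => rw [Finset.sum_cons, Finset.sum_cons, moment_add, ih]

lemma moment0_nonneg (μ : ℝ →₀ ℝ) (h : ∀ x, 0 ≤ μ x) : 0 ≤ moment 0 μ := by
  refine Finset.sum_nonneg fun x _ => ?_
  simpa using h x

lemma eq_zero_of_moment0 (μ : ℝ →₀ ℝ) (h : ∀ x, 0 ≤ μ x) (h0 : moment 0 μ = 0) : μ = 0 := by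
  have : ∀ x ∈ μ.support, μ x * x ^ 0 = 0 := by
    rw [moment] at h0
    exact (Finset.sum_eq_zero_iff_of_nonneg (fun x _ => by simpa using h x)).mp h0
  ext x
  by_cases hx : x ∈ μ.support
  · simpa using this x hx
  · simpa using Finsupp.notMem_support_iff.mp hx

lemma mom1_le (μ : ℝ →₀ ℝ) (h : ∀ x, 0 ≤ μ x) (c : ℝ) (hs : ∀ x ∈ μ.support, x ≤ c) :
    moment 1 μ ≤ c * moment 0 μ := by
  rw [moment, moment, Finset.mul_sum]
  refine Finset.sum_le_sum fun x hx => ?_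
  have := h x; have := hs x hx
  simp only [pow_one, pow_zero, mul_one]
  nlinarith

lemma mom1_ge (μ : ℝ →₀ ℝ) (h : ∀ x, 0 ≤ μ x) (c : ℝ) (hs : ∀ x ∈ μ.support, c ≤ x) :
    c * moment 0 μ ≤ moment 1 μ := by
  rw [moment, moment, Finset.mul_sum]
  refine Finset.sum_le_sum fun x hx => ?_
  have := h x; have := hs x hx
  simp only [pow_one, pow_zero, mul_one]
  nlinarith

/-- inside part (restriction to `[a,b]`). -/
noncomputable def inpart (a b : ℝ) (μ : ℝ →₀ ℝ) : ℝ →₀ ℝ :=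
  Finsupp.filter (fun x => x ∈ Set.Icc a b) μ

/-- outside part. -/
noncomputable def outpart (a b : ℝ) (μ : ℝ →₀ ℝ) : ℝ →₀ ℝ :=
  Finsupp.filter (fun x => x ∉ Set.Icc a b) μ

lemma inpart_add_outpart (a b : ℝ) (μ : ℝ →₀ ℝ) : inpart a b μ + outpart a b μ = μ := by
  ext x
  simp only [inpart, outpart, Finsupp.filter_apply, Finsupp.add_apply]
  split_ifs with h1 h2 <;> simp_all

lemma inpart_apply (a b : ℝ) (μ : ℝ →₀ ℝ) (x : ℝ) :
    inpart a b μ x = if x ∈ Set.Icc a b then μ x else 0 := by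
  rw [inpart, Finsupp.filter_apply]

lemma outpart_apply (a b : ℝ) (μ : ℝ →₀ ℝ) (x : ℝ) :
    outpart a b μ x = if x ∈ Set.Icc a b then 0 else μ x := by
  rw [outpart, Finsupp.filter_apply]
  split_ifs with h1 h2 <;> simp_all

lemma inpart_add (a b : ℝ) (μ ν : ℝ →₀ ℝ) :
    inpart a b (μ + ν) = inpart a b μ + inpart a b ν := by
  ext x
  simp only [inpart_apply, Finsupp.add_apply]
  split_ifs <;> simp

lemma outpart_add (a b : ℝ) (μ ν : ℝ →₀ ℝ) :
    outpart a b (μ + ν) = outpart a b μ + outpart a b ν := by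
  ext x
  simp only [outpart_apply, Finsupp.add_apply]
  split_ifs <;> simp

lemma inpart_supp (a b : ℝ) (μ : ℝ →₀ ℝ) : ∀ x ∈ (inpart a b μ).support, x ∈ Set.Icc a b := by
  intro x hx
  by_contra hc
  exact (Finsupp.mem_support_iff.mp hx) (by rw [inpart_apply]; simp [hc])

noncomputable def extremeF (a b : ℝ) (μ : ℝ →₀ ℝ) : ℝ →₀ ℝ :=
  outpart a b μ
    + Finsupp.single a ((b * moment 0 (inpart a b μ) - moment 1 (inpart a b μ)) / (b - a))
    + Finsupp.single b ((moment 1 (inpart a b μ) - a * moment 0 (inpart a b μ)) / (b - a))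

lemma extremeF_apply_out (a b : ℝ) (μ : ℝ →₀ ℝ) {x : ℝ} (hx : x ∉ Set.Icc a b)
    (hab : a ≤ b) : extremeF a b μ x = μ x := by
  have ha : a ≠ x := fun h => hx (h ▸ ⟨le_refl a, hab⟩)
  have hb : b ≠ x := fun h => hx (h ▸ ⟨hab, le_refl b⟩)
  simp [extremeF, outpart_apply, hx, Finsupp.single_apply, ha, hb]

lemma extremeF_apply_in (a b : ℝ) (μ : ℝ →₀ ℝ) {x : ℝ} (hx : x ∈ Set.Ioo a b) :
    extremeF a b μ x = 0 := by
  have hx' : x ∈ Set.Icc a b := ⟨le_of_lt hx.1, le_of_lt hx.2⟩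
  have ha : a ≠ x := (ne_of_gt hx.1).symm
  have hb : b ≠ x := (ne_of_lt hx.2).symm
  simp [extremeF, outpart_apply, hx', Finsupp.single_apply, ha, hb]

lemma moment_extremeF (j : ℕ) (hj : j = 0 ∨ j = 1) (a b : ℝ) (hab : a < b) (μ : ℝ →₀ ℝ) :
    moment j (extremeF a b μ) = moment j μ := by
  have hba : b - a ≠ 0 := sub_ne_zero.mpr (ne_of_gt hab)
  have key : moment j μ = moment j (inpart a b μ) + moment j (outpart a b μ) := by
    conv_lhs => rw [← inpart_add_outpart a b μ]
    exact moment_add j _ _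
  rw [extremeF, moment_add, moment_add, moment_single, moment_single, key]
  rcases hj with h | h <;> subst h <;> field_simp <;> ring

lemma extremeF_nonneg (a b : ℝ) (hab : a < b) (μ : ℝ →₀ ℝ) (h : ∀ x, 0 ≤ μ x) :
    ∀ x, 0 ≤ extremeF a b μ x := by
  have hin : ∀ x, 0 ≤ inpart a b μ x := by
    intro x; rw [inpart_apply]; split_ifs <;> simp [h x]
  have hsupp := inpart_supp a b μ
  have hba : (0:ℝ) < b - a := sub_pos.mpr hab
  have hP : 0 ≤ (b * moment 0 (inpart a b μ) - moment 1 (inpart a b μ)) / (b - a) := by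
    apply div_nonneg _ (le_of_lt hba)
    have := mom1_le (inpart a b μ) hin b (fun x hx => (hsupp x hx).2)
    linarith
  have hQ : 0 ≤ (moment 1 (inpart a b μ) - a * moment 0 (inpart a b μ)) / (b - a) := by
    apply div_nonneg _ (le_of_lt hba)
    have := mom1_ge (inpart a b μ) hin a (fun x hx => (hsupp x hx).1)
    linarith
  intro x
  have hout : 0 ≤ outpart a b μ x := by
    rw [outpart_apply]; split_ifs <;> simp [h x]
  have h1 : 0 ≤ Finsupp.single a ((b * moment 0 (inpart a b μ) - moment 1 (inpart a b μ)) / (b - a)) x := by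
    rw [Finsupp.single_apply]; split <;> simp [hP]
  have h2 : 0 ≤ Finsupp.single b ((moment 1 (inpart a b μ) - a * moment 0 (inpart a b μ)) / (b - a)) x := by
    rw [Finsupp.single_apply]; split <;> simp [hQ]
  simp only [extremeF, Finsupp.add_apply]
  positivity

lemma extremeF_add (a b : ℝ) (μ ν : ℝ →₀ ℝ) :
    extremeF a b (μ + ν) = extremeF a b μ + extremeF a b ν := by
  simp only [extremeF, inpart_add, moment_add, outpart_add]
  ext x
  simp only [Finsupp.add_apply, Finsupp.single_apply]
  split_ifs <;> ring

lemma extremeF_zero (a b : ℝ) : extremeF a b (0 : ℝ →₀ ℝ) = 0 := by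
  have : inpart a b (0 : ℝ →₀ ℝ) = 0 := by ext x; rw [inpart_apply]; split_ifs <;> simp
  have h2 : outpart a b (0 : ℝ →₀ ℝ) = 0 := by ext x; rw [outpart_apply]; split_ifs <;> simp
  simp [extremeF, this, h2, moment_zero]

lemma extremeF_sum (a b : ℝ) {ι : Type*} (s : Finset ι) (f : ι → ℝ →₀ ℝ) :
    extremeF a b (∑ i ∈ s, f i) = ∑ i ∈ s, extremeF a b (f i) := by
  induction s using Finset.cons_induction with
  | empty => simp [extremeF_zero]
  | cons i s hi ih => rw [Finset.sum_cons, Finset.sum_cons, extremeF_add, ih]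

/-- uniqueness of the extreme move -/
lemma extreme_unique (a b : ℝ) (hab : a < b) (μ ν : ℝ →₀ ℝ)
    (h : IsExtremeMoveOn a b μ ν) : ν = extremeF a b μ := by
  obtain ⟨hout, hin, h0, h1⟩ := h
  have hba : b - a ≠ 0 := sub_ne_zero.mpr (ne_of_gt hab)
  -- decompose ν
  have hdec : ν = outpart a b μ + Finsupp.single a (ν a) + Finsupp.single b (ν b) := by
    ext x
    simp only [Finsupp.add_apply, outpart_apply, Finsupp.single_apply]
    by_cases hx : x ∈ Set.Icc a b
    · rcases eq_or_ne a x with rfl | hax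
      · have hbx : b ≠ a := ne_of_gt hab
        simp [hbx]
        exact fun h' => absurd h' (lt_asymm hab)
      · rcases eq_or_ne b x with rfl | hbx
        · simp [hax]
          exact fun h' => absurd h' (lt_asymm hab)
        · have : x ∈ Set.Ioo a b := ⟨lt_of_le_of_ne hx.1 hax, lt_of_le_of_ne hx.2 (Ne.symm hbx)⟩
          simp [hx, hax, hbx, hin x this]
    · have ha : a ≠ x := fun hh => hx (hh ▸ ⟨le_refl a, le_of_lt hab⟩)
      have hb : b ≠ x := fun hh => hx (hh ▸ ⟨le_of_lt hab, le_refl b⟩)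
      simp [hx, ha, hb, hout x hx]
  -- moment equations
  have hμ : ∀ j, moment j μ = moment j (inpart a b μ) + moment j (outpart a b μ) := by
    intro j
    conv_lhs => rw [← inpart_add_outpart a b μ]
    exact moment_add j _ _
  have e0 : ν a + ν b = moment 0 (inpart a b μ) := by
    have := h0
    rw [hdec, moment_add, moment_add, moment_single, moment_single, hμ 0] at this
    simp only [pow_zero, mul_one] at this
    linarith
  have e1 : ν a * a + ν b * b = moment 1 (inpart a b μ) := by
    have := h1
    rw [hdec, moment_add, moment_add, moment_single, moment_single, hμ 1] at this
    simp only [pow_one] at this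
    linarith
  have hva : ν a = (b * moment 0 (inpart a b μ) - moment 1 (inpart a b μ)) / (b - a) := by
    field_simp
    linear_combination b * e0 - e1
  have hvb : ν b = (moment 1 (inpart a b μ) - a * moment 0 (inpart a b μ)) / (b - a) := by
    field_simp
    linear_combination e1 - a * e0
  rw [hdec, extremeF, hva, hvb]

lemma sum_erase_eq (z : ℝ) {ι : Type*} (s : Finset ι) (f : ι → ℝ →₀ ℝ) :
    ∑ i ∈ s, (f i).erase z = (∑ i ∈ s, f i).erase z := by
  ext w
  rw [Finsupp.finset_sum_apply]
  rcases eq_or_ne w z with rfl | hw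
  · simp [Finsupp.erase_same]
  · simp only [Finsupp.erase_ne hw]
    rw [Finsupp.finset_sum_apply]

lemma splits_decomp (μ μ' : ℝ →₀ ℝ) (hμ : ∀ x, 0 ≤ μ x) (h : Splits μ μ') :
    ∃ ν : ℝ → (ℝ →₀ ℝ), (∀ x y, 0 ≤ ν x y) ∧ (∀ x, moment 0 (ν x) = μ x) ∧
      (∀ x, moment 1 (ν x) = μ x * x) ∧ μ' = ∑ x ∈ μ.support, ν x := by
  induction h with
  | refl =>
    refine ⟨fun x => Finsupp.single x (μ x), ?_, ?_, ?_, ?_⟩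
    · intro x y
      rw [Finsupp.single_apply]; split <;> simp [hμ x]
    · intro x; rw [moment_single]; simp
    · intro x; rw [moment_single]; simp
    · conv_lhs => rw [← Finsupp.sum_single μ]
      rfl
  | @tail b c _ hstep ih =>
    obtain ⟨ν, hnn, h0, h1, hb⟩ := ih
    obtain ⟨z, ρ, hz, hρnn, hρ0, hρ1, hc⟩ := hstep
    have hbz : b z = ∑ x ∈ μ.support, ν x z := by
      rw [hb, Finsupp.finset_sum_apply]
    have hbzne : b z ≠ 0 := ne_of_gt hz
    refine ⟨fun x => (ν x).erase z + (ν x z / b z) • ρ, ?_, ?_, ?_, ?_⟩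
    · intro x y
      have h1' : 0 ≤ (ν x).erase z y := by
        rcases eq_or_ne y z with rfl | hy
        · simp [Finsupp.erase_same]
        · rw [Finsupp.erase_ne hy]; exact hnn x y
      have h2' : 0 ≤ ((ν x z / b z) • ρ) y := by
        rw [Finsupp.smul_apply, smul_eq_mul]
        exact mul_nonneg (div_nonneg (hnn x z) (le_of_lt hz)) (hρnn y)
      rw [Finsupp.add_apply]; positivity
    · intro x
      rw [moment_add, moment_erase, moment_smul, hρ0, h0]
      field_simp
      ring
    · intro x
      rw [moment_add, moment_erase, moment_smul, hρ1, h1]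
      field_simp
      ring
    · rw [hc, Finset.sum_add_distrib, sum_erase_eq, ← hb, ← Finset.sum_smul,
        ← Finset.sum_div, ← hbz, div_self hbzne, one_smul]

lemma decomp_splits (μ : ℝ →₀ ℝ) (hμ : ∀ x, 0 ≤ μ x) (ν : ℝ → (ℝ →₀ ℝ))
    (hnn : ∀ x ∈ μ.support, ∀ y, 0 ≤ ν x y)
    (h0 : ∀ x ∈ μ.support, moment 0 (ν x) = μ x)
    (h1 : ∀ x ∈ μ.support, moment 1 (ν x) = μ x * x) :
    Splits μ (∑ x ∈ μ.support, ν x) := by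
  have key : ∀ s : Finset ℝ, s ⊆ μ.support →
      Splits μ (Finsupp.filter (fun x => x ∉ s) μ + ∑ x ∈ s, ν x) := by
    intro s
    induction s using Finset.induction_on with
    | empty =>
      intro _
      have : Finsupp.filter (fun x => x ∉ (∅ : Finset ℝ)) μ = μ := by
        ext x; rw [Finsupp.filter_apply]; simp
      rw [this]
      simp only [Finset.sum_empty, add_zero]; exact Relation.ReflTransGen.refl
    | @insert z s hzs ih =>
      intro hsub
      have hzsupp : z ∈ μ.support := hsub (Finset.mem_insert_self z s)
      have hssub : s ⊆ μ.support := fun x hx => hsub (Finset.mem_insert_of_mem hx)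
      set η := Finsupp.filter (fun x => x ∉ s) μ + ∑ x ∈ s, ν x with hη
      have hηz : η z = μ z + ∑ x ∈ s, ν x z := by
        rw [hη, Finsupp.add_apply, Finsupp.filter_apply, if_pos hzs, Finsupp.finset_sum_apply]
      have hμz : 0 < μ z := lt_of_le_of_ne (hμ z) (Ne.symm (Finsupp.mem_support_iff.mp hzsupp))
      have hsz : 0 ≤ ∑ x ∈ s, ν x z := Finset.sum_nonneg fun x hx => hnn x (hssub hx) z
      have hηzpos : 0 < η z := by rw [hηz]; linarith
      refine Relation.ReflTransGen.tail (ih hssub) ?_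
      refine ⟨z, Finsupp.single z (η z - μ z) + ν z, hηzpos, ?_, ?_, ?_, ?_⟩
      · intro y
        have : 0 ≤ Finsupp.single z (η z - μ z) y := by
          rw [Finsupp.single_apply]; split <;> [skip; rfl] <;> rw [hηz] <;> linarith
        rw [Finsupp.add_apply]
        exact add_nonneg this (hnn z hzsupp y)
      · rw [moment_add, moment_single, h0 z hzsupp]; simp
      · rw [moment_add, moment_single, h1 z hzsupp]; simp; ring
      · ext w
        rcases eq_or_ne w z with rfl | hw
        · rw [Finsupp.add_apply, Finsupp.filter_apply, if_neg (by simp), Finsupp.add_apply,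
            Finsupp.add_apply, Finsupp.erase_same, Finsupp.single_apply, if_pos rfl,
            Finsupp.finset_sum_apply, Finset.sum_insert hzs, hηz]
          ring
        · simp only [Finsupp.add_apply, Finsupp.erase_ne hw, Finsupp.single_apply,
            if_neg (Ne.symm hw), hη, Finsupp.filter_apply, Finsupp.finset_sum_apply,
            Finset.sum_insert hzs, Finset.mem_insert, hw, false_or]
          ring
  have h := key μ.support (le_refl _)
  have : Finsupp.filter (fun x => x ∉ μ.support) μ = 0 := by
    ext x; rw [Finsupp.filter_apply]
    split_ifs with hx
    · simp
    · simp [Finsupp.notMem_support_iff.mp hx]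
  rwa [this, zero_add] at h

set_option maxHeartbeats 1000000 in
lemma resplit (a b : ℝ) (hab : a < b) (W : ℝ →₀ ℝ) (hW : ∀ y, 0 ≤ W y)
    (hsupp : ∀ y ∈ W.support, y ≤ a ∨ b ≤ y)
    (m : ℝ → ℝ) (T : Finset ℝ) (hT : ∀ y ∈ T, a ≤ y ∧ y ≤ b) (hm : ∀ y ∈ T, 0 < m y)
    (h0 : ∑ y ∈ T, m y = moment 0 W) (h1 : ∑ y ∈ T, m y * y = moment 1 W) :
    ∃ σ : ℝ → (ℝ →₀ ℝ),
      (∀ y ∈ T, (∀ w, 0 ≤ σ y w) ∧ moment 0 (σ y) = m y ∧ moment 1 (σ y) = m y * y) ∧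
      ∑ y ∈ T, σ y = W := by
  set WL := Finsupp.filter (fun x => x ≤ a) W with hWL
  set WR := Finsupp.filter (fun x => ¬ x ≤ a) W with hWR
  have hWLR : WL + WR = W := Finsupp.filter_pos_add_filter_neg W _
  have hWLnn : ∀ y, 0 ≤ WL y := by
    intro y; rw [hWL, Finsupp.filter_apply]; split <;> simp [hW y]
  have hWRnn : ∀ y, 0 ≤ WR y := by
    intro y; rw [hWR, Finsupp.filter_apply]; split <;> simp [hW y]
  have hWLsupp : ∀ x ∈ WL.support, x ≤ a := by
    intro x hx
    by_contra hc
    exact (Finsupp.mem_support_iff.mp hx) (by rw [hWL, Finsupp.filter_apply, if_neg hc])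
  have hWRsupp : ∀ x ∈ WR.support, b ≤ x := by
    intro x hx
    have hxne := Finsupp.mem_support_iff.mp hx
    have hxa : ¬ x ≤ a := by
      by_contra hc
      exact hxne (by rw [hWR, Finsupp.filter_apply, if_neg (not_not_intro hc)])
    have hxW : x ∈ W.support := by
      rw [Finsupp.mem_support_iff]
      intro hc
      exact hxne (by rw [hWR, Finsupp.filter_apply]; split <;> simp [hc])
    rcases hsupp x hxW with h | h
    · exact absurd h hxa
    · exact h
  set ML := moment 0 WL with hML
  set MR := moment 0 WR with hMR
  set SL := moment 1 WL with hSL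
  set SR := moment 1 WR with hSR
  have hMLnn : 0 ≤ ML := moment0_nonneg WL hWLnn
  have hMRnn : 0 ≤ MR := moment0_nonneg WR hWRnn
  have hSLle : SL ≤ a * ML := mom1_le WL hWLnn a hWLsupp
  have hSRge : b * MR ≤ SR := mom1_ge WR hWRnn b hWRsupp
  have hMsum : ML + MR = moment 0 W := by rw [hML, hMR, ← moment_add, hWLR]
  have hSsum : SL + SR = moment 1 W := by rw [hSL, hSR, ← moment_add, hWLR]
  by_cases hML0 : ML = 0
  · -- left part vanishes
    have hWL0 : WL = 0 := eq_zero_of_moment0 WL hWLnn (by rw [← hML]; exact hML0)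
    have hSL0 : SL = 0 := by rw [hSL, hWL0]; simp [moment]
    have hW' : W = WR := by rw [← hWLR, hWL0, zero_add]
    have hMM : moment 0 W = MR := by rw [← hMsum, hML0, zero_add]
    have hSS : moment 1 W = SR := by rw [← hSsum, hSL0, zero_add]
    by_cases hM0 : moment 0 W = 0
    · -- everything zero
      have hW0 : W = 0 := eq_zero_of_moment0 W hW hM0
      have hT0 : T = ∅ := by
        by_contra hc
        obtain ⟨y, hy⟩ := Finset.nonempty_iff_ne_empty.mpr hc
        have : 0 < ∑ y ∈ T, m y :=
          Finset.sum_pos hm ⟨y, hy⟩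
        rw [h0, hM0] at this
        exact lt_irrefl 0 this
      exact ⟨fun _ => 0, by simp [hT0], by simp [hT0, hW0]⟩
    · -- all mass at b
      have hMpos : 0 < moment 0 W := lt_of_le_of_ne (moment0_nonneg W hW) (Ne.symm hM0)
      have hSb : moment 1 W = b * moment 0 W := by
        have hle : moment 1 W ≤ b * moment 0 W := by
          rw [← h0, ← h1, Finset.mul_sum]
          refine Finset.sum_le_sum fun y hy => ?_
          have := (hT y hy).2
          have := le_of_lt (hm y hy)
          nlinarith
        have hge : b * moment 0 W ≤ moment 1 W := by
          rw [hSS, hMM]; exact hSRge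
        linarith
      have hyb : ∀ y ∈ T, y = b := by
        intro y hy
        by_contra hc
        have hyltb : y < b := lt_of_le_of_ne (hT y hy).2 hc
        have hsum : ∑ y ∈ T, m y * (b - y) = 0 := by
          rw [Finset.sum_congr rfl (fun y _ => by ring_nf : ∀ y ∈ T, m y * (b - y) = m y * b - m y * y)]
          rw [Finset.sum_sub_distrib, ← Finset.sum_mul, h0, h1, hSb]
          ring
        have hterms : ∀ y ∈ T, 0 ≤ m y * (b - y) := fun y hy =>
          mul_nonneg (le_of_lt (hm y hy)) (by linarith [(hT y hy).2])
        have := (Finset.sum_eq_zero_iff_of_nonneg hterms).mp hsum y hy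
        have := hm y hy
        nlinarith
      refine ⟨fun y => (m y / moment 0 W) • W, fun y hy => ⟨?_, ?_, ?_⟩, ?_⟩
      · intro w
        rw [Finsupp.smul_apply, smul_eq_mul]
        exact mul_nonneg (div_nonneg (le_of_lt (hm y hy)) (le_of_lt hMpos)) (hW w)
      · rw [moment_smul]; field_simp
      · rw [moment_smul, hSb, hyb y hy]; field_simp
      · rw [← Finset.sum_smul, ← Finset.sum_div, h0, div_self hM0, one_smul]
  · by_cases hMR0 : MR = 0
    · -- right part vanishes, all mass at a
      have hWR0 : WR = 0 := eq_zero_of_moment0 WR hWRnn (by rw [← hMR]; exact hMR0)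
      have hSR0 : SR = 0 := by rw [hSR, hWR0]; simp [moment]
      have hMM : moment 0 W = ML := by rw [← hMsum, hMR0, add_zero]
      have hSS : moment 1 W = SL := by rw [← hSsum, hSR0, add_zero]
      have hMpos : 0 < moment 0 W := by
        rw [hMM]; exact lt_of_le_of_ne hMLnn (Ne.symm hML0)
      have hM0 : moment 0 W ≠ 0 := ne_of_gt hMpos
      have hSa : moment 1 W = a * moment 0 W := by
        have hge : a * moment 0 W ≤ moment 1 W := by
          rw [← h0, ← h1, Finset.mul_sum]
          refine Finset.sum_le_sum fun y hy => ?_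
          have := (hT y hy).1
          have := le_of_lt (hm y hy)
          nlinarith
        have hle : moment 1 W ≤ a * moment 0 W := by
          rw [hSS, hMM]; exact hSLle
        linarith
      have hya : ∀ y ∈ T, y = a := by
        intro y hy
        by_contra hc
        have hsum : ∑ y ∈ T, m y * (y - a) = 0 := by
          rw [Finset.sum_congr rfl (fun y _ => by ring_nf : ∀ y ∈ T, m y * (y - a) = m y * y - m y * a)]
          rw [Finset.sum_sub_distrib, ← Finset.sum_mul, h0, h1, hSa]
          ring
        have hterms : ∀ y ∈ T, 0 ≤ m y * (y - a) := fun y hy =>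
          mul_nonneg (le_of_lt (hm y hy)) (by linarith [(hT y hy).1])
        have := (Finset.sum_eq_zero_iff_of_nonneg hterms).mp hsum y hy
        have := hm y hy
        have := (hT y hy).1
        nlinarith [lt_of_le_of_ne (hT y hy).1 (Ne.symm hc)]
      refine ⟨fun y => (m y / moment 0 W) • W, fun y hy => ⟨?_, ?_, ?_⟩, ?_⟩
      · intro w
        rw [Finsupp.smul_apply, smul_eq_mul]
        exact mul_nonneg (div_nonneg (le_of_lt (hm y hy)) (le_of_lt hMpos)) (hW w)
      · rw [moment_smul]; field_simp
      · rw [moment_smul, hSa, hya y hy]; field_simp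
      · rw [← Finset.sum_smul, ← Finset.sum_div, h0, div_self hM0, one_smul]
    · -- main case : both masses positive
      have hMLpos : 0 < ML := lt_of_le_of_ne hMLnn (Ne.symm hML0)
      have hMRpos : 0 < MR := lt_of_le_of_ne hMRnn (Ne.symm hMR0)
      set D := ML * SR - SL * MR with hD
      have hDpos : 0 < D := by
        have h1' : ML * (b * MR) ≤ ML * SR := mul_le_mul_of_nonneg_left hSRge (le_of_lt hMLpos)
        have h2' : SL * MR ≤ (a * ML) * MR := mul_le_mul_of_nonneg_right hSLle (le_of_lt hMRpos)
        have hba : (0:ℝ) < b - a := sub_pos.mpr hab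
        have h3' : 0 < ML * MR * (b - a) := by positivity
        rw [hD]; nlinarith
      have hDne : D ≠ 0 := ne_of_gt hDpos
      refine ⟨fun y => (m y * (SR - y * MR) / D) • WL + (m y * (y * ML - SL) / D) • WR,
        fun y hy => ⟨?_, ?_, ?_⟩, ?_⟩
      · intro w
        have hy1 : 0 ≤ SR - y * MR := by nlinarith [(hT y hy).2]
        have hy2 : 0 ≤ y * ML - SL := by nlinarith [(hT y hy).1]
        have hmy := le_of_lt (hm y hy)
        rw [Finsupp.add_apply, Finsupp.smul_apply, Finsupp.smul_apply, smul_eq_mul, smul_eq_mul]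
        have := hWLnn w
        have := hWRnn w
        positivity
      · rw [moment_add, moment_smul, moment_smul, ← hML, ← hMR]
        field_simp
        ring
      · rw [moment_add, moment_smul, moment_smul, ← hSL, ← hSR]
        field_simp
        ring
      · rw [Finset.sum_add_distrib, ← Finset.sum_smul, ← Finset.sum_smul]
        have hα : ∑ y ∈ T, m y * (SR - y * MR) / D = 1 := by
          rw [← Finset.sum_div]
          rw [Finset.sum_congr rfl (fun y _ => by ring : ∀ y ∈ T, m y * (SR - y * MR) = m y * SR - m y * y * MR)]
          rw [Finset.sum_sub_distrib, ← Finset.sum_mul, ← Finset.sum_mul, h0, h1, ← hMsum, ← hSsum]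
          field_simp
          ring
        have hβ : ∑ y ∈ T, m y * (y * ML - SL) / D = 1 := by
          rw [← Finset.sum_div]
          rw [Finset.sum_congr rfl (fun y _ => by ring : ∀ y ∈ T, m y * (y * ML - SL) = m y * y * ML - m y * SL)]
          rw [Finset.sum_sub_distrib, ← Finset.sum_mul, ← Finset.sum_mul, h0, h1, ← hMsum, ← hSsum]
          field_simp
          ring
        rw [hα, hβ, one_smul, one_smul, hWLR]

end Helpers

/-- **Lemma (moves vs. extreme moves and splitting).** If `μ ⪯ μ'` and `v` is a
move that can be applied to `μ`, then `vμ ⪯ v̄μ'`, where `v̄` is the extreme move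
on the interval of `v`. -/
theorem move_split_extreme (v : Move) (μ μ' ν' : ℝ →₀ ℝ)
    (hμ : IsDistribution μ) (hsplit : Splits μ μ')
    (happ : IsDistribution (μ + v.δ))
    (hext : IsExtremeMoveOn v.a (v.a + 1) μ' ν') :
    Splits (μ + v.δ) ν' := by
    classical
  set a := v.a with ha
  set b := v.a + 1 with hb
  have hab : a < b := by rw [ha, hb]; linarith
  obtain ⟨ν, hnn, h0, h1, hμ'⟩ := splits_decomp μ μ' hμ.1 hsplit
  have hν' : ν' = ∑ x ∈ μ.support, extremeF a b (ν x) := by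
    rw [extreme_unique a b hab μ' ν' hext, hμ', extremeF_sum]
  have hδin : ∀ x, x ∉ Set.Icc a b → v.δ x = 0 := by
    intro x hx
    by_contra hc
    exact hx (Set.mem_Icc.mpr (v.supp_subset x hc))
  have hout_eq : ∀ y, y ∉ Set.Icc a b → (μ + v.δ) y = μ y := by
    intro y hy
    rw [Finsupp.add_apply, hδin y hy, add_zero]
  set T := (μ + v.δ).support.filter (fun y => y ∈ Set.Icc a b) with hT
  set Sin := μ.support.filter (fun x => x ∈ Set.Icc a b) with hSin
  set W := ∑ x ∈ Sin, extremeF a b (ν x) with hW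
  have hWnn : ∀ w, 0 ≤ W w := by
    intro w
    rw [hW, Finsupp.finset_sum_apply]
    exact Finset.sum_nonneg fun x _ => extremeF_nonneg a b hab (ν x) (hnn x) w
  have hWsupp : ∀ y ∈ W.support, y ≤ a ∨ b ≤ y := by
    intro y hy
    by_contra hc
    push_neg at hc
    refine (Finsupp.mem_support_iff.mp hy) ?_
    rw [hW, Finsupp.finset_sum_apply]
    exact Finset.sum_eq_zero fun x _ => extremeF_apply_in a b (ν x) ⟨hc.1, hc.2⟩
  -- inside moments of μ+δ equal those of μ
  have hinδ : inpart a b v.δ = v.δ := by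
    ext x
    rw [inpart_apply]
    split_ifs with hx
    · rfl
    · exact (hδin x hx).symm
  have hmomin : ∀ j, moment j (inpart a b (μ + v.δ)) = moment j (inpart a b μ) + moment j v.δ := by
    intro j
    rw [inpart_add, moment_add, hinδ]
  -- sums over T
  have hsumT0 : ∑ y ∈ T, (μ + v.δ) y = moment 0 (inpart a b (μ + v.δ)) := by
    rw [moment]
    have hsupp : (inpart a b (μ + v.δ)).support = T := by
      rw [hT, inpart, Finsupp.support_filter]
    rw [hsupp]
    refine Finset.sum_congr rfl fun y hy => ?_
    have hyIcc : y ∈ Set.Icc a b := (Finset.mem_filter.mp hy).2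
    rw [inpart_apply, if_pos hyIcc, pow_zero, mul_one]
  have hsumT1 : ∑ y ∈ T, (μ + v.δ) y * y = moment 1 (inpart a b (μ + v.δ)) := by
    rw [moment]
    have hsupp : (inpart a b (μ + v.δ)).support = T := by
      rw [hT, inpart, Finsupp.support_filter]
    rw [hsupp]
    refine Finset.sum_congr rfl fun y hy => ?_
    have hyIcc : y ∈ Set.Icc a b := (Finset.mem_filter.mp hy).2
    rw [inpart_apply, if_pos hyIcc, pow_one]
  have hsumSin0 : ∑ x ∈ Sin, μ x = moment 0 (inpart a b μ) := by
    rw [moment]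
    have hsupp : (inpart a b μ).support = Sin := by
      rw [hSin, inpart, Finsupp.support_filter]
    rw [hsupp]
    refine Finset.sum_congr rfl fun y hy => ?_
    have hyIcc : y ∈ Set.Icc a b := (Finset.mem_filter.mp hy).2
    rw [inpart_apply, if_pos hyIcc, pow_zero, mul_one]
  have hsumSin1 : ∑ x ∈ Sin, μ x * x = moment 1 (inpart a b μ) := by
    rw [moment]
    have hsupp : (inpart a b μ).support = Sin := by
      rw [hSin, inpart, Finsupp.support_filter]
    rw [hsupp]
    refine Finset.sum_congr rfl fun y hy => ?_
    have hyIcc : y ∈ Set.Icc a b := (Finset.mem_filter.mp hy).2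
    rw [inpart_apply, if_pos hyIcc, pow_one]
  have hW0 : moment 0 W = ∑ x ∈ Sin, μ x := by
    rw [hW, moment_sum]
    exact Finset.sum_congr rfl fun x _ => by
      rw [moment_extremeF 0 (Or.inl rfl) a b hab, h0]
  have hW1 : moment 1 W = ∑ x ∈ Sin, μ x * x := by
    rw [hW, moment_sum]
    exact Finset.sum_congr rfl fun x _ => by
      rw [moment_extremeF 1 (Or.inr rfl) a b hab, h1]
  have hres0 : ∑ y ∈ T, (μ + v.δ) y = moment 0 W := by
    rw [hsumT0, hmomin 0, v.m0, add_zero, hW0, hsumSin0]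
  have hres1 : ∑ y ∈ T, (μ + v.δ) y * y = moment 1 W := by
    rw [hsumT1, hmomin 1, v.m1, add_zero, hW1, hsumSin1]
  obtain ⟨σ, hσ, hσsum⟩ := resplit a b hab W hWnn hWsupp (fun y => (μ + v.δ) y) T
    (fun y hy => Set.mem_Icc.mp (Finset.mem_filter.mp hy).2)
    (fun y hy => lt_of_le_of_ne (happ.1 y)
      (Ne.symm (Finsupp.mem_support_iff.mp (Finset.mem_filter.mp hy).1)))
    hres0 hres1
  -- assemble decomposition of μ + δ
  set τ : ℝ → (ℝ →₀ ℝ) := fun y => if y ∈ Set.Icc a b then σ y else extremeF a b (ν y) with hτ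
  have hmemT : ∀ y ∈ (μ + v.δ).support, y ∈ Set.Icc a b → y ∈ T := by
    intro y hy hyIcc
    rw [hT, Finset.mem_filter]
    exact ⟨hy, hyIcc⟩
  have hμy : ∀ y ∈ (μ + v.δ).support, y ∉ Set.Icc a b → μ y = (μ + v.δ) y := by
    intro y _ hyIcc
    rw [hout_eq y hyIcc]
  have hkey := decomp_splits (μ + v.δ) happ.1 τ ?_ ?_ ?_
  rotate_left
  · intro y hy w
    rw [hτ]
    beta_reduce
    by_cases hyIcc : y ∈ Set.Icc a b
    · rw [if_pos hyIcc]
      exact (hσ y (hmemT y hy hyIcc)).1 w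
    · rw [if_neg hyIcc]
      exact extremeF_nonneg a b hab (ν y) (hnn y) w
  · intro y hy
    rw [hτ]
    beta_reduce
    by_cases hyIcc : y ∈ Set.Icc a b
    · rw [if_pos hyIcc]
      exact (hσ y (hmemT y hy hyIcc)).2.1
    · rw [if_neg hyIcc, moment_extremeF 0 (Or.inl rfl) a b hab, h0, hμy y hy hyIcc]
  · intro y hy
    rw [hτ]
    beta_reduce
    by_cases hyIcc : y ∈ Set.Icc a b
    · rw [if_pos hyIcc]
      exact (hσ y (hmemT y hy hyIcc)).2.2
    · rw [if_neg hyIcc, moment_extremeF 1 (Or.inr rfl) a b hab, h1, hμy y hy hyIcc]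
  -- identify the total sum with ν'
  have hfinal : ∑ y ∈ (μ + v.δ).support, τ y = ν' := by
    rw [← Finset.sum_filter_add_sum_filter_not (μ + v.δ).support (fun y => y ∈ Set.Icc a b) τ]
    have hTpart : ∑ y ∈ (μ + v.δ).support.filter (fun y => y ∈ Set.Icc a b), τ y = W := by
      rw [← hT, ← hσsum]
      refine Finset.sum_congr rfl fun y hy => ?_
      rw [hτ]
      beta_reduce
      exact if_pos (Finset.mem_filter.mp hy).2
    have houtpart : (μ + v.δ).support.filter (fun y => y ∉ Set.Icc a b)
        = μ.support.filter (fun x => x ∉ Set.Icc a b) := by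
      ext y
      simp only [Finset.mem_filter, Finsupp.mem_support_iff]
      constructor
      · rintro ⟨hy1, hy2⟩
        exact ⟨by rwa [hout_eq y hy2] at hy1, hy2⟩
      · rintro ⟨hy1, hy2⟩
        exact ⟨by rwa [hout_eq y hy2], hy2⟩
    have hOpart : ∑ y ∈ (μ + v.δ).support.filter (fun y => y ∉ Set.Icc a b), τ y
        = ∑ y ∈ μ.support.filter (fun x => x ∉ Set.Icc a b), extremeF a b (ν y) := by
      rw [houtpart]
      refine Finset.sum_congr rfl fun y hy => ?_
      rw [hτ]
      beta_reduce
      exact if_neg (Finset.mem_filter.mp hy).2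
    rw [hTpart, hOpart, hν', hW, hSin]
    exact Finset.sum_filter_add_sum_filter_not μ.support (fun x => x ∈ Set.Icc a b)
      (fun x => extremeF a b (ν x))
  rwa [hfinal] at hkey
end
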